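/- Fix a real constant c > e. Let p(N) denote the probability that a uniformly random permutation of {0,…,N−1} has more than c·log N cycles (natural logarithm, fixed points counting as cycles). Then p(N) = O(√(log N) / N^{c(log c − 1)}) as N → ∞. -/

import Mathlib

open Asymptotics Filter

/-- The number of cycles of a permutation of `Fin N`, counting fixed points as cycles of
length 1 (one cycle per minimal element of a cycle). -/
noncomputable def cycleCount {N : ℕ} (σ : Equiv.Perm (Fin N)) : ℕ :=
  Nat.card {x : Fin N // ∀ m : ℕ, x ≤ (σ ^ m) x}

open scoped Classical in
open Finset in
lemma cycleCount_eq_card_filter {N : ℕ} (σ : Equiv.Perm (Fin N)) :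
    cycleCount σ = (univ.filter fun x : Fin N => ∀ m : ℕ, x ≤ (σ ^ m) x).card := by
  rw [cycleCount, Nat.card_eq_fintype_card, Fintype.card_subtype]

open Finset Equiv Equiv.Perm

section key
variable {n : ℕ} (τ : Perm (Fin n))

lemma decomp_zero_pow (m : ℕ) (x : Fin n) :
    ((decomposeFin.symm ((0 : Fin (n+1)), τ)) ^ m) x.succ = ((τ ^ m) x).succ := by
  induction m with
  | zero => simp
  | succ m ih =>
    rw [pow_succ', Perm.mul_apply, ih, decomposeFin_symm_apply_succ, swap_self,
      pow_succ', Perm.mul_apply]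
    rfl

variable (q : Fin n)

lemma decomp_succ_apply (y : Fin n) :
    (decomposeFin.symm (q.succ, τ)) y.succ
      = if τ y = q then 0 else (τ y).succ := by
  rw [decomposeFin_symm_apply_succ]
  split_ifs with h
  · rw [h, swap_apply_right]
  · exact swap_apply_of_ne_of_ne (Fin.succ_ne_zero _) (fun hc => h (Fin.succ_injective _ hc))

lemma decomp_succ_pow (y : Fin n) (h : ∀ m : ℕ, (τ ^ m) y ≠ q) (m : ℕ) :
    ((decomposeFin.symm (q.succ, τ)) ^ m) y.succ = ((τ ^ m) y).succ := by
  induction m with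
  | zero => simp
  | succ m ih =>
    rw [pow_succ', Perm.mul_apply, ih, decomp_succ_apply, pow_succ', Perm.mul_apply,
      if_neg]
    have := h (m + 1)
    rwa [pow_succ', Perm.mul_apply] at this

lemma decomp_succ_hits_zero : ∀ (m : ℕ) (y : Fin n), (τ ^ (m+1)) y = q →
    ∃ k : ℕ, ((decomposeFin.symm (q.succ, τ)) ^ k) y.succ = 0 := by
  intro m
  induction m with
  | zero =>
    intro y hy
    rw [pow_one] at hy
    exact ⟨1, by rw [pow_one, decomp_succ_apply, if_pos hy]⟩
  | succ m ih =>
    intro y hy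
    by_cases hτ : τ y = q
    · exact ⟨1, by rw [pow_one, decomp_succ_apply, if_pos hτ]⟩
    · have hy' : (τ ^ (m+1)) (τ y) = q := by
        rw [← Perm.mul_apply, ← pow_succ]; exact hy
      obtain ⟨k, hk⟩ := ih (τ y) hy'
      refine ⟨k + 1, ?_⟩
      rw [pow_succ, Perm.mul_apply, decomp_succ_apply, if_neg hτ, hk]
end key

open scoped Classical in
lemma cycleCount_decomposeFin {n : ℕ} (p : Fin (n+1)) (τ : Perm (Fin n)) :
    cycleCount (decomposeFin.symm (p, τ)) = cycleCount τ + if p = 0 then 1 else 0 := by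
  rw [cycleCount_eq_card_filter, cycleCount_eq_card_filter]
  by_cases hp : p = 0
  · subst hp
    rw [if_pos rfl]
    have hset : (univ.filter fun x : Fin (n+1) =>
          ∀ m : ℕ, x ≤ ((decomposeFin.symm ((0 : Fin (n+1)), τ)) ^ m) x)
        = insert 0 ((univ.filter fun y : Fin n => ∀ m : ℕ, y ≤ (τ ^ m) y).image Fin.succ) := by
      ext x
      refine Fin.cases ?_ (fun y => ?_) x
      · simp [Fin.zero_le]
      · simp only [mem_filter, mem_univ, true_and, mem_insert, mem_image]
        constructor
        · intro h
          refine Or.inr ⟨y, fun m => ?_, rfl⟩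
          have := h m
          rwa [decomp_zero_pow, Fin.succ_le_succ_iff] at this
        · rintro (h | ⟨z, hz, hzy⟩)
          · exact absurd h (Fin.succ_ne_zero _)
          · obtain rfl : z = y := Fin.succ_injective _ hzy
            intro m
            rw [decomp_zero_pow, Fin.succ_le_succ_iff]
            exact hz m
    rw [hset, card_insert_of_notMem, card_image_of_injective _ (Fin.succ_injective n)]
    simp only [mem_image]
    rintro ⟨y, -, hy⟩
    exact Fin.succ_ne_zero y hy
  · rw [if_neg hp]
    obtain ⟨q, rfl⟩ := Fin.eq_succ_of_ne_zero hp
    set σ := decomposeFin.symm (q.succ, τ) with hσ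
    -- the minimum of the cycle of q
    set F := univ.filter (fun y : Fin n => τ.SameCycle q y) with hF
    have hFne : F.Nonempty := ⟨q, by simp [hF, Equiv.Perm.SameCycle.refl]⟩
    set μ := F.min' hFne with hμ
    have hμcyc : τ.SameCycle q μ := (mem_filter.1 (F.min'_mem hFne)).2
    have hμmin : ∀ m : ℕ, μ ≤ (τ ^ m) μ := by
      intro m
      refine F.min'_le _ (mem_filter.2 ⟨mem_univ _, hμcyc.trans ⟨(m : ℤ), by simp⟩⟩)
    -- minimal elements of distinct labels in same cycle coincide
    have huniq : ∀ y z : Fin n, τ.SameCycle y z → (∀ m : ℕ, y ≤ (τ ^ m) y) →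
        (∀ m : ℕ, z ≤ (τ ^ m) z) → y = z := by
      intro y z hyz hy hz
      obtain ⟨i, -, hi⟩ := hyz.exists_pow_eq'
      obtain ⟨j, -, hj⟩ := hyz.symm.exists_pow_eq'
      exact le_antisymm (hi ▸ hy i) (hj ▸ hz j)
    -- not same cycle gives never hitting q
    have hns : ∀ y : Fin n, ¬ τ.SameCycle q y → ∀ m : ℕ, (τ ^ m) y ≠ q := by
      intro y hsc m hm
      exact hsc (Equiv.Perm.SameCycle.symm ⟨(m : ℤ), by simpa using hm⟩)
    -- same cycle gives hitting q at a positive power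
    have hsc_hit : ∀ y : Fin n, τ.SameCycle q y → ∃ m : ℕ, (τ ^ (m+1)) y = q := by
      intro y hsc
      obtain ⟨i, -, hi⟩ := hsc.symm.exists_pow_eq'
      cases i with
      | zero =>
        refine ⟨orderOf τ - 1, ?_⟩
        rw [Nat.sub_add_cancel (orderOf_pos τ), pow_orderOf_eq_one]
        simpa using hi
      | succ i => exact ⟨i, hi⟩
    have hnotmem : ∀ y : Fin n, τ.SameCycle q y →
        ¬ (∀ m : ℕ, y.succ ≤ (σ ^ m) y.succ) := by
      intro y hsc hmin
      obtain ⟨m, hm⟩ := hsc_hit y hsc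
      obtain ⟨k, hk⟩ := decomp_succ_hits_zero τ q m y hm
      have := hmin k
      rw [hk, Fin.le_zero_iff] at this
      exact Fin.succ_ne_zero y this
    rw [Nat.add_zero]
    refine (Finset.card_bij'
      (fun y _ => if τ.SameCycle q y then (0 : Fin (n+1)) else y.succ)
      (fun x _ => Fin.cases μ (fun y => y) x) ?_ ?_ ?_ ?_).symm
    · intro y hy
      simp only [mem_filter, mem_univ, true_and] at hy ⊢
      split_ifs with h
      · intro m; exact Fin.zero_le _
      · intro m
        rw [decomp_succ_pow τ q y (hns y h), Fin.succ_le_succ_iff]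
        exact hy m
    · intro x hx
      simp only [mem_filter, mem_univ, true_and] at hx ⊢
      rcases Fin.eq_zero_or_eq_succ x with rfl | ⟨y, rfl⟩
      · simpa using hμmin
      · have hnc : ¬ τ.SameCycle q y := fun h => hnotmem y h hx
        simp only [Fin.cases_succ]
        intro m
        have := hx m
        rwa [decomp_succ_pow τ q y (hns y hnc), Fin.succ_le_succ_iff] at this
    · intro y hy
      simp only [mem_filter, mem_univ, true_and] at hy
      show Fin.cases μ (fun y => y) (if τ.SameCycle q y then (0 : Fin (n+1)) else y.succ) = y
      by_cases h : τ.SameCycle q y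
      · rw [if_pos h]
        simpa using huniq μ y (hμcyc.symm.trans h) hμmin hy
      · rw [if_neg h]
        simp only [Fin.cases_succ]
    · intro x hx
      simp only [mem_filter, mem_univ, true_and] at hx
      rcases Fin.eq_zero_or_eq_succ x with rfl | ⟨y, rfl⟩
      · simp [hμcyc]
      · have hnc : ¬ τ.SameCycle q y := fun h => hnotmem y h (by simpa using hx)
        simp [hnc]

lemma sum_pow_cycleCount (x : ℝ) (n : ℕ) :
    ∑ σ : Perm (Fin n), x ^ cycleCount σ = ∏ j ∈ Finset.range n, (x + j) := by
  induction n with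
  | zero =>
    rw [Finset.range_zero, Finset.prod_empty]
    have : ∀ σ : Perm (Fin 0), cycleCount σ = 0 := by
      intro σ
      exact Nat.card_of_isEmpty
    simp [this]
  | succ n ih =>
    have hsum : (∑ p : Fin (n+1), if p = 0 then x else (1:ℝ)) = x + n := by
      simp [Finset.sum_ite, Finset.filter_eq', Finset.filter_ne', Finset.sum_const]
    calc ∑ σ : Perm (Fin (n+1)), x ^ cycleCount σ
        = ∑ pr : Fin (n+1) × Perm (Fin n), x ^ cycleCount (decomposeFin.symm pr) :=
          (Equiv.sum_comp decomposeFin.symm _).symm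
      _ = ∑ p : Fin (n+1), ∑ τ : Perm (Fin n), (if p = 0 then x else 1) * x ^ cycleCount τ := by
          rw [Fintype.sum_prod_type]
          refine Finset.sum_congr rfl fun p _ => Finset.sum_congr rfl fun τ _ => ?_
          rw [cycleCount_decomposeFin, pow_add]
          split_ifs <;> ring
      _ = (∑ p : Fin (n+1), if p = 0 then x else (1:ℝ)) * ∑ τ : Perm (Fin n), x ^ cycleCount τ := by
          rw [Finset.sum_mul]
          exact Finset.sum_congr rfl fun p _ => (Finset.mul_sum _ _ _).symm
      _ = ∏ j ∈ Finset.range (n+1), (x + j) := by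
          rw [hsum, ih, Finset.prod_range_succ]
          ring

open scoped Classical in
lemma count_mul_le (c : ℝ) (hc1 : 1 < c) (N : ℕ) :
    (Nat.card {σ : Perm (Fin N) // c * Real.log N < (cycleCount σ : ℝ)} : ℝ)
      * c ^ (c * Real.log N) ≤ ∏ j ∈ Finset.range N, (c + j) := by
  have hc0 : (0:ℝ) < c := lt_trans one_pos hc1
  rw [Nat.card_eq_fintype_card, Fintype.card_subtype]
  set t := c * Real.log N with ht
  set S := Finset.univ.filter (fun σ : Perm (Fin N) => t < (cycleCount σ : ℝ)) with hS
  have h1 : (S.card : ℝ) * c ^ t = ∑ _σ ∈ S, c ^ t := by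
    rw [Finset.sum_const, nsmul_eq_mul]
  rw [h1]
  have h2 : ∑ σ ∈ S, c ^ t ≤ ∑ σ ∈ S, c ^ cycleCount σ := by
    refine Finset.sum_le_sum fun σ hσ => ?_
    have htle : t ≤ ((cycleCount σ : ℕ) : ℝ) := le_of_lt (Finset.mem_filter.1 hσ).2
    calc c ^ t ≤ c ^ ((cycleCount σ : ℕ) : ℝ) := (Real.rpow_le_rpow_left_iff hc1).2 htle
      _ = c ^ cycleCount σ := Real.rpow_natCast c _
  refine le_trans h2 ?_
  rw [← sum_pow_cycleCount]
  exact Finset.sum_le_sum_of_subset_of_nonneg (Finset.subset_univ S)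
    (fun σ _ _ => pow_nonneg hc0.le _)

lemma prod_le_factorial_mul (c : ℝ) (hc1 : 1 < c) (N : ℕ) :
    ∏ j ∈ Finset.range N, (c + j)
      ≤ (N.factorial : ℝ) * Real.exp ((c - 1) * (1 + Real.log N)) := by
  have h1 : ∏ j ∈ Finset.range N, (c + j)
      ≤ ∏ j ∈ Finset.range N, (((j:ℝ) + 1) * Real.exp ((c - 1)/((j:ℝ) + 1))) := by
    refine Finset.prod_le_prod (fun j _ => add_nonneg (by linarith) (Nat.cast_nonneg j))
      (fun j _ => ?_)
    have hj : (0:ℝ) < (j:ℝ) + 1 := by positivity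
    have hexp := Real.add_one_le_exp ((c - 1)/((j:ℝ) + 1))
    have heq : c + j = ((j:ℝ) + 1) * ((c - 1)/((j:ℝ) + 1) + 1) := by
      field_simp
      ring
    rw [heq]
    exact mul_le_mul_of_nonneg_left hexp hj.le
  refine h1.trans ?_
  rw [Finset.prod_mul_distrib, ← Real.exp_sum]
  have h2 : (∏ j ∈ Finset.range N, ((j:ℝ) + 1)) = (N.factorial : ℝ) := by
    rw [← Finset.prod_range_add_one_eq_factorial]
    push_cast
    rfl
  rw [h2]
  refine mul_le_mul_of_nonneg_left (Real.exp_le_exp.2 ?_) (Nat.cast_nonneg _)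
  have h3 : ∑ j ∈ Finset.range N, (c - 1)/((j:ℝ) + 1)
      = (c - 1) * ((harmonic N : ℚ) : ℝ) := by
    rw [harmonic]
    push_cast
    rw [Finset.mul_sum]
    refine Finset.sum_congr rfl fun j _ => ?_
    rw [div_eq_mul_inv]
  rw [h3]
  exact mul_le_mul_of_nonneg_left (harmonic_le_one_add_log N) (by linarith)

/-- For a fixed constant `c > e`, the probability that a uniformly random permutation of
`{0,…,N−1}` has more than `c·log N` cycles is `O(√(log N) / N^{c(log c − 1)})`. -/
theorem stmt_11 (c : ℝ) (hc : Real.exp 1 < c) :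
    (fun N : ℕ =>
        (Nat.card {σ : Equiv.Perm (Fin N) // c * Real.log N < (cycleCount σ : ℝ)} : ℝ)
          / (Nat.factorial N : ℝ))
      =O[atTop]
      (fun N : ℕ => Real.sqrt (Real.log N) / (N : ℝ) ^ (c * (Real.log c - 1))) := by
  have he1 : (1:ℝ) < Real.exp 1 := by
    have := Real.add_one_le_exp (1:ℝ); linarith
  have hc1 : 1 < c := he1.trans hc
  have hc0 : (0:ℝ) < c := lt_trans one_pos hc1
  rw [isBigO_iff]
  refine ⟨Real.exp (c - 1) / Real.sqrt (Real.log 2), ?_⟩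
  filter_upwards [eventually_ge_atTop 2] with N hN
  have hN2 : (2:ℝ) ≤ (N:ℝ) := by exact_mod_cast hN
  have hN0 : (0:ℝ) < N := by linarith
  have hN1 : (1:ℝ) ≤ N := by linarith
  have hlog2 : (0:ℝ) < Real.log 2 := Real.log_pos (by norm_num)
  have hlogN2 : Real.log 2 ≤ Real.log N := Real.log_le_log (by norm_num) hN2
  have hfac : (0:ℝ) < (N.factorial : ℝ) := by exact_mod_cast N.factorial_pos
  set K := (Nat.card {σ : Equiv.Perm (Fin N) // c * Real.log N < (cycleCount σ : ℝ)} : ℝ)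
    with hK
  have hKnn : 0 ≤ K := by positivity
  have h1 : K * c ^ (c * Real.log N)
      ≤ (N.factorial : ℝ) * Real.exp ((c-1)*(1+Real.log N)) :=
    (count_mul_le c hc1 N).trans (prod_le_factorial_mul c hc1 N)
  have hexp0 : (0:ℝ) < c ^ (c * Real.log N) := Real.rpow_pos_of_pos hc0 _
  have h2 : K / (N.factorial : ℝ)
      ≤ Real.exp ((c-1)*(1+Real.log N)) / c ^ (c * Real.log N) := by
    rw [div_le_div_iff₀ hfac hexp0]
    exact h1.trans_eq (mul_comm _ _)
  have h3 : Real.exp ((c-1)*(1+Real.log N)) / c ^ (c * Real.log N)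
      = Real.exp (c-1) * ((N:ℝ) ^ (-(1:ℝ)) * (N:ℝ) ^ (-(c * (Real.log c - 1)))) := by
    rw [Real.rpow_def_of_pos hc0, Real.rpow_def_of_pos hN0, Real.rpow_def_of_pos hN0,
      ← Real.exp_sub, ← Real.exp_add, ← Real.exp_add]
    congr 1
    ring
  have h4 : (N:ℝ) ^ (-(1:ℝ)) ≤ 1 := Real.rpow_le_one_of_one_le_of_nonpos hN1 (by norm_num)
  have hNa : (0:ℝ) ≤ (N:ℝ) ^ (-(c * (Real.log c - 1))) := (Real.rpow_pos_of_pos hN0 _).le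
  have h5 : Real.exp (c-1)
      ≤ Real.exp (c-1) / Real.sqrt (Real.log 2) * Real.sqrt (Real.log N) := by
    rw [div_mul_eq_mul_div, le_div_iff₀ (Real.sqrt_pos.mpr hlog2)]
    exact mul_le_mul_of_nonneg_left (Real.sqrt_le_sqrt hlogN2) (Real.exp_pos _).le
  have hfinal : K / (N.factorial : ℝ)
      ≤ Real.exp (c - 1) / Real.sqrt (Real.log 2)
        * (Real.sqrt (Real.log N) / (N:ℝ) ^ (c * (Real.log c - 1))) := by
    calc K / (N.factorial : ℝ)
        ≤ Real.exp (c-1) * ((N:ℝ) ^ (-(1:ℝ)) * (N:ℝ) ^ (-(c * (Real.log c - 1)))) :=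
          h2.trans_eq h3
      _ ≤ Real.exp (c-1) * (1 * (N:ℝ) ^ (-(c * (Real.log c - 1)))) := by
          gcongr
      _ = Real.exp (c-1) * (N:ℝ) ^ (-(c * (Real.log c - 1))) := by ring
      _ ≤ Real.exp (c-1) / Real.sqrt (Real.log 2) * Real.sqrt (Real.log N)
            * (N:ℝ) ^ (-(c * (Real.log c - 1))) := by
          gcongr
      _ = Real.exp (c - 1) / Real.sqrt (Real.log 2)
            * (Real.sqrt (Real.log N) / (N:ℝ) ^ (c * (Real.log c - 1))) := by
          rw [Real.rpow_neg hN0.le]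
          ring
  have hg : 0 ≤ Real.sqrt (Real.log N) / (N:ℝ) ^ (c * (Real.log c - 1)) := by positivity
  rw [Real.norm_eq_abs, Real.norm_eq_abs, abs_of_nonneg (by positivity), abs_of_nonneg hg]
  exact hfinal
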